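/- Let q ≥ 2 and j ≥ 2, and define b_{j,m,n} by b_{j,m,1} = [1^m 0^j]_q and b_{j,m,n+1} = b_{j,m,n} - (q^{j+m-n} - 1). Then for all 1 ≤ n ≤ q^{j-1} and all m ≥ n - 1 (m ≥ 1), b_{j,m+1,n+1} = b_{j,m,n} + 1. -/

import Mathlib

/-- `[1^m 0^j]_q = ∑_{i<m} q^{j+i}`. -/
def onesZeros (q j m : ℕ) : ℕ := ∑ i ∈ Finset.range m, q ^ (j + i)

/-- `bSeq q j m t` is `b_{j,m,t+1}`, defined by `b_{j,m,1} = [1^m 0^j]_q`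
and `b_{j,m,n+1} = b_{j,m,n} - (q^{j+m-n} - 1)`. -/
def bSeq (q j m : ℕ) : ℕ → ℕ
  | 0 => onesZeros q j m
  | t + 1 => bSeq q j m t - (q ^ (j + m - t - 1) - 1)

lemma bSeq_closed (q j m : ℕ) (hq : 1 ≤ q) :
    ∀ t, t ≤ m → bSeq q j m t = (∑ i ∈ Finset.range (m - t), q ^ (j + i)) + t := by
  intro t
  induction t with
  | zero => intro _; simp [bSeq, onesZeros]
  | succ t ih =>
    intro ht
    have ht' : t < m := ht
    rw [bSeq, ih ht'.le]
    have hmt : m - t = (m - t - 1) + 1 := by omega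
    rw [hmt, Finset.sum_range_succ]
    have hidx : j + (m - t - 1) = j + m - t - 1 := by omega
    rw [hidx]
    have hb : 1 ≤ q ^ (j + m - t - 1) := Nat.one_le_pow _ _ hq
    have : m - (t + 1) = m - t - 1 := by omega
    rw [this]
    omega

/-- for `q ≥ 2`, `j ≥ 2`, `1 ≤ n ≤ q^{j-1}`, `m ≥ 1`, `m ≥ n-1`:
`b_{j,m+1,n+1} = b_{j,m,n} + 1`. -/
theorem stmt6 (q j : ℕ) (hq : 2 ≤ q) (hj : 2 ≤ j) (n m : ℕ)
    (hn1 : 1 ≤ n) (hn2 : n ≤ q ^ (j - 1)) (hm1 : 1 ≤ m) (hm : n - 1 ≤ m) :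
    bSeq q j (m + 1) n = bSeq q j m (n - 1) + 1 := by
  rw [bSeq_closed q j (m+1) (by omega) n (by omega),
      bSeq_closed q j m (by omega) (n-1) hm]
  have : m + 1 - n = m - (n - 1) := by omega
  rw [this]
  omega
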